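/- The function d_f(x,y) := f(x) + f(y) - 2·sup over paths γ from x to y of min over t∈[0,1] of f(γ(t)) is a pseudo-metric on M; that is, it is nonnegative, symmetric, vanishes on the diagonal, and satisfies the triangle inequality. -/

import Mathlib

open Set

/-- `d_f(x,y) = f x + f y - 2 * sup over paths γ from x to y of (min of f along γ)`. -/
noncomputable def treeDist {M : Type*} [TopologicalSpace M] (f : M → ℝ) (x y : M) : ℝ :=
  f x + f y - 2 * sSup {m : ℝ | ∃ γ : Path x y, m = sInf (f '' Set.range γ)}

/-- For a connected, locally path-connected, compact space `M` and continuous `f : M → ℝ`,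
`d_f` is a pseudo-metric: nonnegative, symmetric, vanishing on the diagonal, and
satisfying the triangle inequality. -/
theorem treeDist_pseudoMetric {M : Type*} [TopologicalSpace M] [CompactSpace M]
    [ConnectedSpace M] [LocallyPathConnectedSpace M] (f : M → ℝ) (hf : Continuous f) :
    (∀ x y : M, 0 ≤ treeDist f x y) ∧
    (∀ x y : M, treeDist f x y = treeDist f y x) ∧
    (∀ x : M, treeDist f x x = 0) ∧
    (∀ x y z : M, treeDist f x z ≤ treeDist f x y + treeDist f y z) := by
  haveI : PathConnectedSpace M := pathConnectedSpace_iff_connectedSpace.mpr inferInstance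
  obtain ⟨c, hc⟩ : ∃ c : ℝ, ∀ x : M, c ≤ f x := by
    obtain ⟨a, -, ha⟩ := isCompact_univ.exists_isMinOn univ_nonempty hf.continuousOn
    exact ⟨f a, fun x => ha (mem_univ x)⟩
  set S : M → M → Set ℝ :=
    fun x y => {m : ℝ | ∃ γ : Path x y, m = sInf (f '' Set.range γ)} with hS
  have hbb : ∀ (x y : M) (γ : Path x y), BddBelow (f '' Set.range γ) := by
    rintro x y γ
    exact ⟨c, by rintro m ⟨p, -, rfl⟩; exact hc p⟩
  have hne : ∀ (x y : M) (γ : Path x y), (f '' Set.range γ).Nonempty :=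
    fun x y γ => ⟨f x, x, ⟨0, γ.source⟩, rfl⟩
  have hle : ∀ x y : M, ∀ m ∈ S x y, m ≤ f x ∧ m ≤ f y := by
    rintro x y m ⟨γ, rfl⟩
    exact ⟨csInf_le (hbb x y γ) ⟨x, ⟨0, γ.source⟩, rfl⟩,
      csInf_le (hbb x y γ) ⟨y, ⟨1, γ.target⟩, rfl⟩⟩
  have hSne : ∀ x y : M, (S x y).Nonempty := fun x y =>
    ⟨_, PathConnectedSpace.somePath x y, rfl⟩
  have hSbdd : ∀ x y : M, BddAbove (S x y) := fun x y =>
    ⟨f x, fun m hm => (hle x y m hm).1⟩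
  have hSymm : ∀ x y : M, S x y = S y x := by
    intro x y
    ext m
    constructor <;> rintro ⟨γ, rfl⟩ <;> exact ⟨γ.symm, by rw [Path.symm_range]⟩
  have hself : ∀ x : M, sSup (S x x) = f x := by
    intro x
    apply le_antisymm
    · exact csSup_le (hSne x x) fun m hm => (hle x x m hm).1
    · refine le_csSup (hSbdd x x) ⟨Path.refl x, ?_⟩
      rw [Path.refl_range, image_singleton, csInf_singleton]
  have key : ∀ x y z : M, sSup (S x y) + sSup (S y z) ≤ f y + sSup (S x z) := by
    intro x y z
    have main : ∀ m1 ∈ S x y, ∀ m2 ∈ S y z, m1 + m2 ≤ f y + sSup (S x z) := by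
      rintro m1 ⟨γ1, rfl⟩ m2 ⟨γ2, rfl⟩
      set a := sInf (f '' Set.range γ1) with ha
      set b := sInf (f '' Set.range γ2) with hb
      have hmem : a ⊓ b ∈ S x z := by
        refine ⟨γ1.trans γ2, ?_⟩
        rw [Path.trans_range, image_union,
          csInf_union (hbb x y γ1) (hne x y γ1) (hbb y z γ2) (hne y z γ2)]
      have h1 : a ⊓ b ≤ sSup (S x z) := le_csSup (hSbdd x z) hmem
      have h2 : a ≤ f y := (hle x y a ⟨γ1, rfl⟩).2
      have h3 : b ≤ f y := (hle y z b ⟨γ2, rfl⟩).1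
      have h4 : min a b + max a b = a + b := min_add_max a b
      have h5 : max a b ≤ f y := max_le h2 h3
      have h6 : min a b ≤ sSup (S x z) := h1
      linarith
    have h7 : sSup (S x y) ≤ f y + sSup (S x z) - sSup (S y z) := by
      apply csSup_le (hSne x y)
      intro m1 hm1
      have h8 : sSup (S y z) ≤ f y + sSup (S x z) - m1 :=
        csSup_le (hSne y z) fun m2 hm2 => by linarith [main m1 hm1 m2 hm2]
      linarith
    linarith
  refine ⟨?_, ?_, ?_, ?_⟩
  · intro x y
    simp only [treeDist]
    have := (hle x y)
    have h1 : sSup (S x y) ≤ f x := csSup_le (hSne x y) fun m hm => (hle x y m hm).1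
    have h2 : sSup (S x y) ≤ f y := csSup_le (hSne x y) fun m hm => (hle x y m hm).2
    show 0 ≤ f x + f y - 2 * sSup (S x y)
    linarith
  · intro x y
    simp only [treeDist]
    show f x + f y - 2 * sSup (S x y) = f y + f x - 2 * sSup (S y x)
    rw [hSymm x y]; ring
  · intro x
    simp only [treeDist]
    show f x + f x - 2 * sSup (S x x) = 0
    rw [hself x]; ring
  · intro x y z
    simp only [treeDist]
    show f x + f z - 2 * sSup (S x z) ≤
      (f x + f y - 2 * sSup (S x y)) + (f y + f z - 2 * sSup (S y z))
    have := key x y z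
    linarith
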